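/- Let f be the full shift on X = {0,1,2}^ℕ, Φ the constructed potential, k ∈ ℕ, and p = 1/(k+λ). Suppose μ is an f-invariant Borel probability measure with μ(Φ⁻¹(w₀)) = λp and μ(C_{l+λ}(ξ^l)) = p for l = 1,...,k, where C_{l+λ}(ξ^l) is the cylinder of length l+λ generated by ξ^l = O(1^{l+λ−1}2). Then μ = μ_{ξ^k}, the periodic point measure on the orbit of ξ^k. -/

import Mathlib

open scoped Classical ENNReal NNReal

open MeasureTheory

/-- The shift map on the one-sided full shift `{0,1,2}^ℕ`. -/
def shiftMap (ξ : ℕ → Fin 3) : ℕ → Fin 3 := fun k => ξ (k + 1)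

/-- The metric `d_θ(ξ,η) = θ^{min{k ≥ 1 : ξ_k ≠ η_k}}` (indexing from `1`). -/
noncomputable def dtheta (θ : ℝ) (ξ η : ℕ → Fin 3) : ℝ :=
  if hne : ξ = η then 0 else θ ^ (Nat.find (Function.ne_iff.mp hne) + 1)

/-- Euclidean norm on `ℝ²`. -/
noncomputable def enorm2 (p : ℝ × ℝ) : ℝ := Real.sqrt (p.1 ^ 2 + p.2 ^ 2)

/-- `u_k = (x_k, 0)`. -/
noncomputable def useq (x : ℕ → ℝ) (k : ℕ) : ℝ × ℝ := (x k, 0)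

/-- `v_k = (x_k, h(x_k))`. -/
noncomputable def vseq (x : ℕ → ℝ) (h : ℝ → ℝ) (k : ℕ) : ℝ × ℝ := (x k, h (x k))

/-- `w_k = (λ·w₀ + Σ_{j=1}^k v_j)/(k+λ)` with `w₀ = (a,0)`; note `w_0 = (a,0)`. -/
noncomputable def wseq (a : ℝ) (lam : ℕ) (x : ℕ → ℝ) (h : ℝ → ℝ) (k : ℕ) : ℝ × ℝ :=
  ((k + lam : ℝ))⁻¹ • ((lam : ℝ) • ((a : ℝ), (0 : ℝ)) + ∑ j ∈ Finset.Icc 1 k, vseq x h j)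

/-- The potential `Φ` of Example 1 (sequences indexed from `1`, so a sequence `ξ` lies in
`X(l)` iff the first occurrence of the symbol `2` is at (0-based) index `l - 1`):
`Φ = w₀` on `X₀(λ) = X(1) ∪ ⋯ ∪ X(λ)`; for `l > λ`, `Φ = v_{l-λ}` on
`X(l) ∩ C_{l-1}(1^{l-1})` and `Φ = u_{l-λ}` on `X(l) \ C_{l-1}(1^{l-1})`;
and `Φ = w_∞` on `X(∞) = {0,1}^ℕ`. -/
noncomputable def Phi (lam : ℕ) (u v : ℕ → ℝ × ℝ) (w0 winf : ℝ × ℝ)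
    (ξ : ℕ → Fin 3) : ℝ × ℝ :=
  if hex : ∃ k, ξ k = 2 then
    let l := Nat.find hex + 1
    if l ≤ lam then w0
    else if ∀ i < l - 1, ξ i = 1 then v (l - lam) else u (l - lam)
  else winf

/-- The periodic point measure `μ_x = (1/n)(δ_x + ⋯ + δ_{f^{n-1}x})`. -/
noncomputable def pmeasure (n : ℕ) (x : ℕ → Fin 3) : Measure (ℕ → Fin 3) :=
  ((n : ℝ≥0∞))⁻¹ • ∑ i ∈ Finset.range n, Measure.dirac (shiftMap^[i] x)

/-- The periodic point `ξ^k = O(1^{k+λ-1} 2)` of period `k+λ`. -/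
def xiseq (lam k : ℕ) : ℕ → Fin 3 :=
  fun i => if i % (k + lam) = k + lam - 1 then 2 else 1

namespace Stmt17Aux

lemma shift_measurable : Measurable shiftMap :=
  measurable_pi_lambda _ fun _ => measurable_pi_apply _

lemma shift_iter_apply (i : ℕ) (η : ℕ → Fin 3) (t : ℕ) :
    shiftMap^[i] η t = η (t + i) := by
  induction i generalizing t with
  | zero => rfl
  | succ m ih =>
    rw [Function.iterate_succ_apply']
    show (shiftMap^[m] η) (t + 1) = _
    rw [ih]
    congr 1
    omega

lemma xiseq_eq_two (lam k t : ℕ) (h : t % (k + lam) = k + lam - 1) :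
    xiseq lam k t = 2 := if_pos h

lemma xiseq_eq_one (lam k t : ℕ) (h : t % (k + lam) ≠ k + lam - 1) :
    xiseq lam k t = 1 := if_neg h

lemma xiseq_mod (lam k t : ℕ) : xiseq lam k (t % (k + lam)) = xiseq lam k t := by
  unfold xiseq
  rw [Nat.mod_mod_of_dvd t dvd_rfl]

lemma eq_of_sum_le {ι : Type*} (s : Finset ι) (f : ι → ℝ≥0∞) (c : ℝ≥0∞) (hc : c ≠ ⊤)
    (hle : ∀ i ∈ s, f i ≤ c) (hsum : ∑ _i ∈ s, c ≤ ∑ i ∈ s, f i) :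
    ∀ i ∈ s, f i = c := by
  intro i hi
  refine le_antisymm (hle i hi) ?_
  have hfin : ∑ j ∈ s.erase i, f j ≠ ⊤ := by
    refine (ENNReal.sum_lt_top.mpr fun j hj => ?_).ne
    exact lt_of_le_of_lt (hle j (Finset.mem_of_mem_erase hj)) hc.lt_top
  have hchain : c + ∑ j ∈ s.erase i, f j ≤ f i + ∑ j ∈ s.erase i, f j := by
    calc c + ∑ j ∈ s.erase i, f j
        ≤ c + ∑ _j ∈ s.erase i, c := by
          exact add_le_add_right (Finset.sum_le_sum fun j hj => hle j (Finset.mem_of_mem_erase hj)) c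
      _ = ∑ _j ∈ s, c := Finset.add_sum_erase s (fun _ => c) hi
      _ ≤ ∑ j ∈ s, f j := hsum
      _ = f i + ∑ j ∈ s.erase i, f j := (Finset.add_sum_erase s f hi).symm
  exact (ENNReal.add_le_add_iff_right hfin).mp hchain

end Stmt17Aux

set_option maxHeartbeats 1000000 in
set_option synthInstance.maxHeartbeats 400000 in
open Stmt17Aux in
theorem stmt_17 (a b : ℝ) (ha : 0 < a) (hb : 0 < b) (lam : ℕ) (hlam : 3 ≤ lam)
    (h : ℝ → ℝ) (hmono : StrictMonoOn h (Set.Icc 0 a))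
    (hconc : StrictConcaveOn ℝ (Set.Icc 0 a) h)
    (hcont : ContinuousOn h (Set.Icc 0 a)) (h0 : h 0 = 0) (hab : h a = b)
    (θ C : ℝ) (hθ : θ ∈ Set.Ioo (0 : ℝ) 1) (hC : 0 < C)
    (x : ℕ → ℝ) (hx : ∀ k, 1 ≤ k → x k ∈ Set.Ioo 0 a)
    (hanti : StrictAntiOn x (Set.Ici 1))
    (hnorm : ∀ k, 1 ≤ k → enorm2 (vseq x h k) < C * θ ^ k)
    (k : ℕ) (hk : 1 ≤ k)
    (μ : Measure (ℕ → Fin 3)) (hprob : IsProbabilityMeasure μ)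
    (hinv : MeasurePreserving shiftMap μ μ)
    (hw0 : μ (Phi lam (useq x) (vseq x h) (a, 0) (0, 0) ⁻¹' {((a : ℝ), (0 : ℝ))}) =
      (lam : ℝ≥0∞) * (((k + lam : ℕ) : ℝ≥0∞))⁻¹)
    (hcyl : ∀ l, 1 ≤ l → l ≤ k →
      μ {η | ∀ i < l + lam, η i = xiseq lam l i} = (((k + lam : ℕ) : ℝ≥0∞))⁻¹) :
    μ = pmeasure (k + lam) (xiseq lam k) := by
  classical
  set n := k + lam with hn
  set ξ : ℕ → Fin 3 := xiseq lam k with hξdef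
  set p : ℝ≥0∞ := ((n : ℕ) : ℝ≥0∞)⁻¹ with hpdef
  have hn4 : 4 ≤ n := by omega
  have hnne : ((n : ℕ) : ℝ≥0∞) ≠ 0 := Nat.cast_ne_zero.mpr (by omega)
  have hnp : ((n : ℕ) : ℝ≥0∞) * p = 1 := ENNReal.mul_inv_cancel hnne (ENNReal.natCast_ne_top n)
  have hptop : p ≠ ⊤ := by
    simp [hpdef, ENNReal.inv_ne_top, hnne]
  -- values of ξ
  have hξ2 : ∀ t, t % n = n - 1 → ξ t = 2 := by
    intro t ht
    rw [hξdef]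
    exact xiseq_eq_two lam k t (by rw [← hn]; exact ht)
  have hξ1 : ∀ t, t % n ≠ n - 1 → ξ t = 1 := by
    intro t ht
    rw [hξdef]
    exact xiseq_eq_one lam k t (by rw [← hn]; exact ht)
  have hξmod : ∀ t, ξ (t % n) = ξ t := by
    intro t
    rw [hξdef]
    have := xiseq_mod lam k t
    rw [← hn] at this
    exact this
  -- the cylinder
  set Cyl : Set (ℕ → Fin 3) := {η | ∀ i < n, η i = ξ i} with hCyldef
  have hCylMeas : MeasurableSet Cyl := by
    have hC2 : Cyl = ⋂ i, ⋂ (_ : i < n), (fun η : ℕ → Fin 3 => η i) ⁻¹' {ξ i} := by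
      ext η; simp [hCyldef]
    rw [hC2]
    exact MeasurableSet.iInter fun i => MeasurableSet.iInter fun _ =>
      (measurable_pi_apply i) (measurableSet_singleton _)
  have hμCyl : μ Cyl = p := hcyl k hk le_rfl
  have hξmem : ξ ∈ Cyl := fun i _ => rfl
  have hiter : ∀ m, MeasurePreserving (shiftMap^[m]) μ μ := fun m => hinv.iterate m
  set B : ℕ → Set (ℕ → Fin 3) := fun i => shiftMap^[i] ⁻¹' Cyl with hBdef
  have hBmeas : ∀ i, MeasurableSet (B i) := fun i => (shift_measurable.iterate i) hCylMeas
  have hμB : ∀ i, μ (B i) = p := fun i => by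
    rw [hBdef]
    rw [(hiter i).measure_preimage hCylMeas.nullMeasurableSet, hμCyl]
  have hBmem : ∀ i η, η ∈ B i ↔ ∀ t < n, η (t + i) = ξ t := by
    intro i η
    simp only [hBdef, Set.mem_preimage, hCyldef, Set.mem_setOf_eq, shift_iter_apply]
  -- pairwise disjointness of the B i
  have hBdisj' : ∀ i j, i < j → j < n → Disjoint (B i) (B j) := by
    intro i j hij hjn
    rw [Set.disjoint_left]
    intro η hi hj
    have h1 : η ((n - 1) + i) = ξ (n - 1) := (hBmem i η).mp hi (n - 1) (by omega)
    have h2 : η ((i + n - 1 - j) + j) = ξ (i + n - 1 - j) :=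
      (hBmem j η).mp hj (i + n - 1 - j) (by omega)
    rw [show (i + n - 1 - j) + j = (n - 1) + i from by omega, h1] at h2
    have e1 : ξ (n - 1) = 2 := hξ2 _ (Nat.mod_eq_of_lt (by omega))
    have e2 : ξ (i + n - 1 - j) = 1 := by
      apply hξ1
      rw [Nat.mod_eq_of_lt (by omega)]
      omega
    rw [e1, e2] at h2
    exact absurd h2 (by decide)
  have hBdisj : Set.PairwiseDisjoint (↑(Finset.range n)) B := by
    intro i hi j hj hij
    simp only [Finset.coe_range, Set.mem_Iio] at hi hj
    rcases lt_or_gt_of_ne hij with hlt | hgt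
    · exact hBdisj' i j hlt hj
    · exact (hBdisj' j i hgt hi).symm
  -- the union has full measure
  set U : Set (ℕ → Fin 3) := ⋃ i ∈ Finset.range n, B i with hUdef
  have hUmeas : MeasurableSet U :=
    MeasurableSet.biUnion (Finset.range n).countable_toSet fun i _ => hBmeas i
  have hμU : μ U = 1 := by
    rw [hUdef, measure_biUnion_finset hBdisj fun i _ => hBmeas i]
    simp only [hμB, Finset.sum_const, Finset.card_range, nsmul_eq_mul]
    exact hnp
  have hUc : μ Uᶜ = 0 := by
    rw [measure_compl hUmeas (by rw [hμU]; exact ENNReal.one_ne_top), measure_univ, hμU, tsub_self]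
  -- the invariant full-measure set G
  set G : Set (ℕ → Fin 3) := ⋂ m : ℕ, shiftMap^[m] ⁻¹' U with hGdef
  have hGc : μ Gᶜ = 0 := by
    rw [hGdef, Set.compl_iInter]
    refine measure_iUnion_null fun m => ?_
    rw [← Set.preimage_compl, (hiter m).measure_preimage hUmeas.compl.nullMeasurableSet]
    exact hUc
  have hGmeas : MeasurableSet G :=
    MeasurableSet.iInter fun m => (shift_measurable.iterate m) hUmeas
  have hμG : μ G = 1 := by
    have h7 := measure_compl hGmeas.compl (by exact (measure_lt_top μ _).ne)
    rw [compl_compl, measure_univ, hGc, tsub_zero] at h7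
    exact h7
  -- combinatorial key: points of G shift onto ξ
  have key : ∀ η ∈ G, ∃ i < n, shiftMap^[i] η = ξ := by
    intro η hη
    have hmem : ∀ m : ℕ, ∃ i < n, ∀ t < n, η (t + i + m) = ξ t := by
      intro m
      have h1 : shiftMap^[m] η ∈ U := Set.mem_iInter.mp hη m
      simp only [hUdef, Set.mem_iUnion, Finset.mem_range] at h1
      obtain ⟨i, hi, hBi⟩ := h1
      refine ⟨i, hi, fun t ht => ?_⟩
      have h8 := (hBmem i _).mp hBi t ht
      rwa [shift_iter_apply] at h8
    obtain ⟨i, hi, h0'⟩ := hmem 0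
    have blocks : ∀ s, ∀ t < n, η (t + i + s * n) = ξ t := by
      intro s
      induction s with
      | zero => simpa using h0'
      | succ s ih =>
        obtain ⟨j, hj, hjh⟩ := hmem (i + s * n + 1)
        have hjn : j = n - 1 := by
          by_contra hne
          have h1 : η ((n - 2 - j) + j + (i + s * n + 1)) = ξ (n - 2 - j) :=
            hjh _ (by omega)
          have h2 : η ((n - 1) + i + s * n) = ξ (n - 1) := ih (n - 1) (by omega)
          rw [show (n - 2 - j) + j + (i + s * n + 1) = (n - 1) + i + s * n from by omega,
            h2] at h1
          have e1 : ξ (n - 1) = 2 := hξ2 _ (Nat.mod_eq_of_lt (by omega))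
          have e2 : ξ (n - 2 - j) = 1 := by
            apply hξ1
            rw [Nat.mod_eq_of_lt (by omega)]
            omega
          rw [e1, e2] at h1
          exact absurd h1 (by decide)
        intro t ht
        have h3 := hjh t ht
        rwa [show t + j + (i + s * n + 1) = t + i + (s + 1) * n from by
          rw [hjn, Nat.succ_mul]; omega] at h3
    refine ⟨i, hi, funext fun u => ?_⟩
    rw [shift_iter_apply]
    have h4 := blocks (u / n) (u % n) (Nat.mod_lt _ (by omega))
    have h9 : u % n + i + u / n * n = u + i := by
      calc u % n + i + u / n * n = u / n * n + u % n + i := by ring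
        _ = u + i := by rw [Nat.div_add_mod']
    rw [h9] at h4
    rw [h4, hξmod]
  -- the singleton preimages E i
  set E : ℕ → Set (ℕ → Fin 3) := fun i => shiftMap^[i] ⁻¹' {ξ} with hEdef
  have hEmeas : ∀ i, MeasurableSet (E i) := fun i =>
    (shift_measurable.iterate i) (measurableSet_singleton ξ)
  have hEsub : ∀ i, E i ⊆ B i := by
    intro i η hη
    have h10 : shiftMap^[i] η = ξ := hη
    show shiftMap^[i] η ∈ Cyl
    rw [h10]; exact hξmem
  have hEdisj : Set.PairwiseDisjoint (↑(Finset.range n)) E := fun i hi j hj hij =>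
    (hBdisj hi hj hij).mono (hEsub i) (hEsub j)
  have hGsub : G ⊆ ⋃ i ∈ Finset.range n, E i := by
    intro η hη
    obtain ⟨i, hi, hiη⟩ := key η hη
    exact Set.mem_biUnion (Finset.mem_range.mpr hi) hiη
  have hsumE : ∑ _i ∈ Finset.range n, p ≤ ∑ i ∈ Finset.range n, μ (E i) := by
    have h5 : (1 : ℝ≥0∞) ≤ ∑ i ∈ Finset.range n, μ (E i) := by
      calc (1 : ℝ≥0∞) = μ G := hμG.symm
        _ ≤ μ (⋃ i ∈ Finset.range n, E i) := measure_mono hGsub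
        _ = ∑ i ∈ Finset.range n, μ (E i) :=
            measure_biUnion_finset hEdisj fun i _ => hEmeas i
    calc ∑ _i ∈ Finset.range n, p = ((n : ℕ) : ℝ≥0∞) * p := by
          simp [Finset.sum_const, nsmul_eq_mul]
      _ = 1 := hnp
      _ ≤ _ := h5
  have hμE : ∀ i ∈ Finset.range n, μ (E i) = p := by
    refine eq_of_sum_le _ _ _ hptop (fun i _ => ?_) hsumE
    exact le_trans (measure_mono (hEsub i)) (hμB i).le
  have hμxi : μ {ξ} = p := by
    have h11 := hμE 0 (Finset.mem_range.mpr (by omega))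
    simpa [hEdef] using h11
  -- orbit points
  set y : ℕ → (ℕ → Fin 3) := fun j => shiftMap^[j] ξ with hydef
  have hyval : ∀ j t, y j t = ξ (t + j) := fun j t => shift_iter_apply j ξ t
  have hmono' : ∀ j, p ≤ μ {y j} := by
    intro j
    induction j with
    | zero => simp only [hydef, Function.iterate_zero, id_eq]; exact hμxi.ge
    | succ j ih =>
      have hsub : {y j} ⊆ shiftMap ⁻¹' {y (j + 1)} := by
        simp only [Set.singleton_subset_iff, Set.mem_preimage, Set.mem_singleton_iff, hydef]
        rw [Function.iterate_succ_apply']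
      calc p ≤ μ {y j} := ih
        _ ≤ μ (shiftMap ⁻¹' {y (j + 1)}) := measure_mono hsub
        _ = μ {y (j + 1)} :=
            hinv.measure_preimage (measurableSet_singleton _).nullMeasurableSet
  have hperiod : shiftMap^[n] ξ = ξ := by
    funext t
    rw [shift_iter_apply, ← hξmod (t + n), Nat.add_mod_right, hξmod]
  have hyE : ∀ j < n, y j ∈ E ((n - j) % n) := by
    intro j hj
    have hgoal : shiftMap^[(n - j) % n] (y j) = ξ := by
      rcases Nat.eq_zero_or_pos j with rfl | hj1
      · simp only [Nat.sub_zero, Nat.mod_self]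
        simp [hydef]
      · rw [Nat.mod_eq_of_lt (by omega)]
        simp only [hydef, ← Function.iterate_add_apply]
        rw [show n - j + j = n from by omega, hperiod]
    simp only [hEdef, Set.mem_preimage, Set.mem_singleton_iff]
    exact hgoal
  have hμy : ∀ j < n, μ {y j} = p := by
    intro j hj
    refine le_antisymm ?_ (hmono' j)
    calc μ {y j} ≤ μ (E ((n - j) % n)) :=
          measure_mono (Set.singleton_subset_iff.mpr (hyE j hj))
      _ = p := hμE _ (Finset.mem_range.mpr (Nat.mod_lt _ (by omega)))
  -- distinctness of orbit points
  have hyinj : ∀ j < n, ∀ j' < n, j ≠ j' → y j ≠ y j' := by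
    intro j hj j' hj' hne heq
    have h1 : y j (n - 1 - j) = 2 := by
      rw [hyval, show n - 1 - j + j = n - 1 from by omega]
      exact hξ2 _ (Nat.mod_eq_of_lt (by omega))
    have h2 : y j' (n - 1 - j) = 1 := by
      rw [hyval]
      apply hξ1
      rcases lt_or_gt_of_ne hne with hlt | hgt
      · rw [Nat.mod_eq_sub_mod (by omega), Nat.mod_eq_of_lt (by omega)]
        omega
      · rw [Nat.mod_eq_of_lt (by omega)]
        omega
    rw [← heq, h1] at h2
    exact absurd h2 (by decide)
  -- the orbit set
  set O : Set (ℕ → Fin 3) := ⋃ j ∈ Finset.range n, {y j} with hOdef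
  have hOdisj : Set.PairwiseDisjoint (↑(Finset.range n))
      (fun j => ({y j} : Set (ℕ → Fin 3))) := by
    intro i hi j hj hij
    simp only [Finset.coe_range, Set.mem_Iio] at hi hj
    exact Set.disjoint_singleton.mpr (hyinj i hi j hj hij)
  have hOmeas : MeasurableSet O :=
    MeasurableSet.biUnion (Finset.range n).countable_toSet fun j _ => measurableSet_singleton _
  have hμO : μ O = 1 := by
    rw [hOdef, measure_biUnion_finset hOdisj fun j _ => measurableSet_singleton _]
    rw [Finset.sum_congr rfl fun j hj => hμy j (Finset.mem_range.mp hj)]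
    simp only [Finset.sum_const, Finset.card_range, nsmul_eq_mul]
    exact hnp
  have hOc : μ Oᶜ = 0 := by
    rw [measure_compl hOmeas (by rw [hμO]; exact ENNReal.one_ne_top), measure_univ, hμO, tsub_self]
  -- conclude
  refine Measure.ext fun s hs => ?_
  have h1 : μ s = μ (s ∩ O) := by
    have h2 := measure_inter_add_diff s hOmeas (μ := μ)
    have h3 : μ (s \ O) = 0 := measure_mono_null (fun z hz => hz.2) hOc
    rw [← h2, h3, add_zero]
  have h4 : s ∩ O = ⋃ j ∈ Finset.range n, (s ∩ {y j}) := by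
    rw [hOdef, Set.inter_iUnion₂]
  have h5 : μ (s ∩ O) = ∑ j ∈ Finset.range n, μ (s ∩ {y j}) := by
    rw [h4]
    refine measure_biUnion_finset ?_ fun j _ => hs.inter (measurableSet_singleton _)
    intro i hi j hj hij
    exact ((hOdisj hi hj hij).mono Set.inter_subset_right Set.inter_subset_right)
  have h6 : ∀ j < n, μ (s ∩ {y j}) = if y j ∈ s then p else 0 := by
    intro j hj
    by_cases hm : y j ∈ s
    · rw [if_pos hm, Set.inter_eq_self_of_subset_right (Set.singleton_subset_iff.mpr hm)]
      exact hμy j hj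
    · rw [if_neg hm]
      have hsy : s ∩ {y j} = ∅ := by
        ext z
        simp only [Set.mem_inter_iff, Set.mem_singleton_iff, Set.mem_empty_iff_false, iff_false,
          not_and]
        rintro hz rfl
        exact hm hz
      rw [hsy, measure_empty]
  have hrhs : pmeasure n ξ s = ∑ j ∈ Finset.range n, (if y j ∈ s then p else 0) := by
    rw [pmeasure, Measure.smul_apply]
    rw [show ((∑ i ∈ Finset.range n, Measure.dirac (shiftMap^[i] ξ)) s)
        = ∑ i ∈ Finset.range n, Measure.dirac (shiftMap^[i] ξ) s from by
      simp [Measure.coe_finset_sum, Finset.sum_apply]]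
    rw [smul_eq_mul, Finset.mul_sum]
    refine Finset.sum_congr rfl fun j hj => ?_
    rw [Measure.dirac_apply' _ hs, Set.indicator_apply]
    by_cases hm : y j ∈ s
    · rw [if_pos hm, if_pos hm, Pi.one_apply, mul_one, hpdef]
    · rw [if_neg hm, if_neg hm, mul_zero]
  rw [hrhs, h1, h5]
  exact Finset.sum_congr rfl fun j hj => h6 j (Finset.mem_range.mp hj)
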